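/- Let T be a graph with a right action of a group Γ. Then the following are equivalent: (1) for every loopless graph G, the induced action of Γ on the set of graph homomorphisms from T to G is free; (2) for every γ ∈ Γ with γ ≠ 1, there exist a vertex v of T and an integer k ≥ 0 such that v and v·γ^k are adjacent in T. -/
import Mathlib


universe u

/-- For a graph `T` (vertices `V`, symmetric adjacency `adjT`) with a right
action of a group `Γ` by graph automorphisms, the following are equivalent:
(1) for every loopless graph `G`, the induced `Γ`-action on graph homomorphisms
`T → G` (by `(γ·f)(v) = f(v·γ)`) is free;
(2) for every `γ ≠ 1` there are a vertex `v` and `k ≥ 0` with `v` adjacent to `v·γ^k`. -/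
theorem stmt12 {V : Type u} (Γ : Type u) [Group Γ]
    (adjT : V → V → Prop) (hsym : Symmetric adjT)
    (act : Γ → V → V)
    (hact1 : ∀ v, act 1 v = v)
    (hactmul : ∀ γ δ v, act (γ * δ) v = act δ (act γ v))
    (hequiv : ∀ γ u v, adjT u v → adjT (act γ u) (act γ v)) :
    (∀ (W : Type u) (adjG : W → W → Prop), Symmetric adjG → Irreflexive adjG →
        ∀ f : V → W, (∀ u v, adjT u v → adjG (f u) (f v)) →
          ∀ γ : Γ, (∀ v, f (act γ v) = f v) → γ = 1)
      ↔ (∀ γ : Γ, γ ≠ 1 → ∃ (v : V) (k : ℕ), adjT v (act (γ ^ k) v)) := by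
  constructor
  · -- (1) ⇒ (2): contrapositive via the quotient graph T/⟨γ⟩
    intro h1 γ hγ
    by_contra hno
    push_neg at hno
    -- setoid: orbits of the cyclic subgroup generated by γ
    have key : ∀ n : ℤ, ∀ u, ¬ adjT u (act (γ ^ n) u) := by
      intro n u hadj
      rcases le_or_gt 0 n with hn | hn
      · have : (γ : Γ) ^ n = γ ^ n.toNat := by
          rw [← zpow_natCast, Int.toNat_of_nonneg hn]
        exact hno u n.toNat (this ▸ hadj)
      · set w := act (γ ^ n) u with hw
        have hu : u = act (γ ^ (-n)) w := by
          rw [hw, ← hactmul, ← zpow_add, add_neg_cancel, zpow_zero, hact1]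
        have hpos : (0:ℤ) ≤ -n := by omega
        have : (γ : Γ) ^ (-n) = γ ^ (-n).toNat := by
          rw [← zpow_natCast, Int.toNat_of_nonneg hpos]
        exact hno w (-n).toNat (by rw [← this, ← hu]; exact hsym hadj)
    let s : Setoid V := ⟨fun u v => ∃ n : ℤ, v = act (γ ^ n) u, by
      constructor
      · intro u; exact ⟨0, by rw [zpow_zero, hact1]⟩
      · rintro u v ⟨n, rfl⟩
        exact ⟨-n, by rw [← hactmul, ← zpow_add, add_neg_cancel, zpow_zero, hact1]⟩
      · rintro u v w ⟨n, rfl⟩ ⟨m, rfl⟩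
        exact ⟨n + m, by rw [zpow_add, hactmul]⟩⟩
    let adjG : Quotient s → Quotient s → Prop :=
      fun a b => ∃ u v, Quotient.mk s u = a ∧ Quotient.mk s v = b ∧ adjT u v
    have hsymG : Symmetric adjG := by
      rintro a b ⟨u, v, h1, h2, h3⟩; exact ⟨v, u, h2, h1, hsym h3⟩
    have hirr : Irreflexive adjG := by
      rintro a ⟨u, v, h1, h2, h3⟩
      have : s.r u v := Quotient.exact (h1.trans h2.symm)
      rcases this with ⟨n, rfl⟩
      exact key n u h3
    have := h1 (Quotient s) adjG hsymG hirr (Quotient.mk s)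
      (fun u v h => ⟨u, v, rfl, rfl, h⟩) γ
      (fun v => Quotient.sound ⟨-1, by
        rw [← hactmul, zpow_neg_one, mul_inv_cancel, hact1]⟩)
    exact hγ this
  · -- (2) ⇒ (1)
    intro h2 W adjG hsymG hirr f hf γ hfix
    by_contra hγ
    obtain ⟨v, k, hadj⟩ := h2 γ hγ
    have hpow : ∀ (k : ℕ) (v : V), f (act (γ ^ k) v) = f v := by
      intro k
      induction k with
      | zero => intro v; rw [pow_zero, hact1]
      | succ k ih => intro v; rw [pow_succ, hactmul, hfix, ih]
    exact hirr (f v) (by have := hf v _ hadj; rwa [hpow] at this)
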